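/- Let Ω ⊆ ℂ be open, let p : Ω → ℝ be a nonnegative measurable weight (e.g. subharmonic), let n ≥ 1, and let f : Ω → ℂ be polyanalytic of order n on Ω with ∫_Ω |∂̄^k f(z)|² e^{-p(z)} dλ(z) < ∞ for every k = 0, ..., n−1. If u : Ω → ℂ is a solution of ∂̄u = f on Ω satisfying the L² estimate ∫_Ω |u(z)|²/(1+|z|²)^{2n} e^{-p(z)} dλ(z) ≤ n Σ_{k=1}^{n} ∫_Ω |∂̄^{k−1} f(z)|² e^{-p(z)} dλ(z), then there exists a holomorphic function u₀ on Ω such that u(z) = u₀(z) − Σ_{k=1}^{n} ((−1)^k / k!) z̄^k ∂̄^{k−1}f(z) for all z ∈ Ω, and there exists a constant C(n) > 0 depending only on n such that ∫_Ω |u₀(z)|²/(1+|z|²)^{2n} e^{-p(z)} dλ(z) ≤ C(n) Σ_{k=0}^{n−1} ∫_Ω |∂̄^k f(z)|² e^{-p(z)} dλ(z). -/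

import Mathlib

open MeasureTheory

/-- The Wirtinger (Cauchy–Riemann) operator `∂̄u(z) = (1/2)(∂u/∂x + i ∂u/∂y)`. -/
noncomputable def dbar (u : ℂ → ℂ) (z : ℂ) : ℂ :=
  (1 / 2) * (fderiv ℝ u z 1 + Complex.I * fderiv ℝ u z Complex.I)

noncomputable def conjCLM : ℂ →L[ℝ] ℂ := Complex.conjCLE.toContinuousLinearMap

@[simp] lemma conjCLM_apply (v : ℂ) : conjCLM v = (starRingEnd ℂ) v := rfl

lemma hasFDerivAt_conj (z : ℂ) : HasFDerivAt (fun w => (starRingEnd ℂ) w) conjCLM z := by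
  have := Complex.conjCLE.hasFDerivAt (x := z)
  exact this

lemma hasFDerivAt_conj_pow (m : ℕ) (z : ℂ) :
    HasFDerivAt (fun w => (starRingEnd ℂ) w ^ (m + 1))
      ((((m : ℂ) + 1) * (starRingEnd ℂ) z ^ m) • conjCLM) z := by
  induction m with
  | zero => simpa using hasFDerivAt_conj z
  | succ k ih =>
    have h := ih.fun_mul (hasFDerivAt_conj z)
    have heq : (fun w => (starRingEnd ℂ) w ^ (k + 1) * (starRingEnd ℂ) w)
        = fun w => (starRingEnd ℂ) w ^ (k + 1 + 1) := by
      funext w; rw [← pow_succ]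
    rw [heq] at h
    refine h.congr_fderiv ?_
    rw [smul_smul]
    rw [show ((starRingEnd ℂ) z ^ (k+1)) • conjCLM
          + ((starRingEnd ℂ) z * (((k:ℂ)+1) * (starRingEnd ℂ) z ^ k)) • conjCLM
        = (((starRingEnd ℂ) z ^ (k+1)) + ((starRingEnd ℂ) z * (((k:ℂ)+1) * (starRingEnd ℂ) z ^ k))) • conjCLM
      from (add_smul _ _ _).symm]
    congr 1
    push_cast
    ring

lemma differentiableAt_conj_pow (m : ℕ) (z : ℂ) :
    DifferentiableAt ℝ (fun w => (starRingEnd ℂ) w ^ (m + 1)) z :=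
  (hasFDerivAt_conj_pow m z).differentiableAt

lemma dbar_eq_of_hasFDerivAt {g : ℂ → ℂ} {G : ℂ →L[ℝ] ℂ} {z : ℂ}
    (h : HasFDerivAt g G z) :
    dbar g z = (1 / 2) * (G 1 + Complex.I * G Complex.I) := by
  unfold dbar; rw [h.fderiv]

lemma dbar_add {a b : ℂ → ℂ} {z : ℂ} (ha : DifferentiableAt ℝ a z)
    (hb : DifferentiableAt ℝ b z) :
    dbar (fun w => a w + b w) z = dbar a z + dbar b z := by
  rw [dbar_eq_of_hasFDerivAt (ha.hasFDerivAt.fun_add hb.hasFDerivAt)]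
  unfold dbar
  simp only [ContinuousLinearMap.add_apply]
  ring

lemma dbar_mul {a b : ℂ → ℂ} {z : ℂ} (ha : DifferentiableAt ℝ a z)
    (hb : DifferentiableAt ℝ b z) :
    dbar (fun w => a w * b w) z = dbar a z * b z + a z * dbar b z := by
  rw [dbar_eq_of_hasFDerivAt (ha.hasFDerivAt.fun_mul hb.hasFDerivAt)]
  unfold dbar
  simp only [ContinuousLinearMap.add_apply, ContinuousLinearMap.smul_apply, smul_eq_mul]
  ring

lemma dbar_const_mul {a : ℂ → ℂ} {z : ℂ} (ha : DifferentiableAt ℝ a z) (c : ℂ) :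
    dbar (fun w => c * a w) z = c * dbar a z := by
  rw [dbar_eq_of_hasFDerivAt (ha.hasFDerivAt.const_mul c)]
  unfold dbar
  simp only [ContinuousLinearMap.smul_apply, smul_eq_mul]
  ring

lemma dbar_finset_sum {s : Finset ℕ} {F : ℕ → ℂ → ℂ} {z : ℂ}
    (h : ∀ i ∈ s, DifferentiableAt ℝ (F i) z) :
    dbar (fun w => ∑ i ∈ s, F i w) z = ∑ i ∈ s, dbar (F i) z := by
  rw [dbar_eq_of_hasFDerivAt (HasFDerivAt.fun_sum (fun i hi => (h i hi).hasFDerivAt))]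
  unfold dbar
  simp only [ContinuousLinearMap.coe_sum', Finset.sum_apply, Finset.mul_sum,
    ← Finset.sum_add_distrib, ← Finset.sum_div]

lemma dbar_conj_pow (m : ℕ) (z : ℂ) :
    dbar (fun w => (starRingEnd ℂ) w ^ (m + 1)) z = ((m : ℂ) + 1) * (starRingEnd ℂ) z ^ m := by
  rw [dbar_eq_of_hasFDerivAt (hasFDerivAt_conj_pow m z)]
  simp only [ContinuousLinearMap.smul_apply, conjCLM_apply, smul_eq_mul, map_one, Complex.conj_I]
  ring_nf
  rw [Complex.I_sq]
  ring

lemma differentiableAt_complex_of_dbar_eq_zero {h : ℂ → ℂ} {z : ℂ}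
    (hd : DifferentiableAt ℝ h z) (h0 : dbar h z = 0) : DifferentiableAt ℂ h z := by
  set L := fderiv ℝ h z with hLdef
  have h1 : L 1 + Complex.I * L Complex.I = 0 := by
    unfold dbar at h0
    rw [← hLdef] at h0
    field_simp at h0
    simpa using h0
  have hkey : ∀ v : ℂ, L v = L 1 * v := by
    intro v
    have hv : v = (v.re : ℝ) • (1 : ℂ) + (v.im : ℝ) • Complex.I := by
      simp [Complex.real_smul]
    have hLI : L Complex.I = Complex.I * L 1 := by
      linear_combination (L Complex.I) * Complex.I_mul_I - Complex.I * h1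
    calc L v = L ((v.re : ℝ) • (1 : ℂ) + (v.im : ℝ) • Complex.I) := by rw [← hv]
    _ = (v.re : ℝ) • L 1 + (v.im : ℝ) • L Complex.I := by
          rw [map_add, ContinuousLinearMap.map_smul, ContinuousLinearMap.map_smul]
    _ = L 1 * v := by
          rw [hLI]
          simp only [Complex.real_smul]
          rw [show ((v.re:ℂ) * L 1 + (v.im:ℂ) * (Complex.I * L 1)) = ((v.re:ℂ) + (v.im:ℂ)*Complex.I) * L 1 from by ring]
          rw [Complex.re_add_im]
          ring
  have hM : (((L 1) • (1 : ℂ →L[ℂ] ℂ)).restrictScalars ℝ) = L := by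
    ext v
    simp [hkey v, mul_comm]
  exact (hasFDerivAt_of_restrictScalars ℝ hd.hasFDerivAt hM).differentiableAt

lemma dbar_contDiffOn {g : ℂ → ℂ} {Ω : Set ℂ} (hΩ : IsOpen Ω) {m : ℕ}
    (hg : ContDiffOn ℝ (m + 1 : ℕ) g Ω) : ContDiffOn ℝ (m : ℕ) (dbar g) Ω := by
  have hF : ContDiffOn ℝ (m : ℕ) (fderiv ℝ g) Ω := by
    apply hg.fderiv_of_isOpen hΩ
    norm_cast
  unfold dbar
  exact contDiffOn_const.mul ((hF.clm_apply contDiffOn_const).add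
    (contDiffOn_const.mul (hF.clm_apply contDiffOn_const)))

lemma dbar_iter_contDiffOn {f : ℂ → ℂ} {Ω : Set ℂ} (hΩ : IsOpen Ω) {n : ℕ}
    (hf : ContDiffOn ℝ (n : ℕ) f Ω) :
    ∀ i, i ≤ n → ContDiffOn ℝ ((n - i : ℕ)) (dbar^[i] f) Ω := by
  intro i
  induction i with
  | zero => intro _; simpa using hf
  | succ k ih =>
    intro hk
    have h1 := ih (by omega)
    have he : (n - k : ℕ) = (n - (k + 1)) + 1 := by omega
    rw [he] at h1
    rw [Function.iterate_succ_apply']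
    exact dbar_contDiffOn hΩ h1

lemma main_holo {n : ℕ} (hn : 1 ≤ n) {f u : ℂ → ℂ} {Ω : Set ℂ} (hΩ : IsOpen Ω)
    (hf : ContDiffOn ℝ (n : ℕ) f Ω) (hpoly : ∀ z ∈ Ω, dbar^[n] f z = 0)
    (hu : ContDiffOn ℝ ((n + 1 : ℕ)) u Ω) (hdu : ∀ z ∈ Ω, dbar u z = f z) :
    DifferentiableOn ℂ (fun w => u w + ∑ i ∈ Finset.range n,
      (-1 : ℂ) ^ (i + 1) / ((i + 1).factorial : ℂ) *
        ((starRingEnd ℂ) w ^ (i + 1) * dbar^[i] f w)) Ω := by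
  intro z hz
  have hgd : ∀ i, i < n → DifferentiableAt ℝ (dbar^[i] f) z := by
    intro i hi
    have h1 := dbar_iter_contDiffOn hΩ hf i (le_of_lt hi)
    have h2 : (1 : ℕ) ≤ n - i := by omega
    exact (h1.contDiffAt (hΩ.mem_nhds hz)).differentiableAt (by exact_mod_cast (by omega : n - i ≠ 0))
  have hud : DifferentiableAt ℝ u z := by
    refine (hu.contDiffAt (hΩ.mem_nhds hz)).differentiableAt ?_
    norm_cast
  have hterm : ∀ i ∈ Finset.range n, DifferentiableAt ℝ
      (fun w => (-1 : ℂ) ^ (i + 1) / ((i + 1).factorial : ℂ) *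
        ((starRingEnd ℂ) w ^ (i + 1) * dbar^[i] f w)) z := by
    intro i hi
    exact ((differentiableAt_conj_pow i z).mul (hgd i (Finset.mem_range.mp hi))).const_mul _
  have hsumd : DifferentiableAt ℝ (fun w => ∑ i ∈ Finset.range n,
      (-1 : ℂ) ^ (i + 1) / ((i + 1).factorial : ℂ) *
        ((starRingEnd ℂ) w ^ (i + 1) * dbar^[i] f w)) z := DifferentiableAt.fun_sum hterm
  apply DifferentiableAt.differentiableWithinAt
  apply differentiableAt_complex_of_dbar_eq_zero (hud.fun_add hsumd)
  rw [dbar_add hud hsumd, dbar_finset_sum hterm, hdu z hz]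
  set b : ℕ → ℂ := fun j => (-1 : ℂ) ^ j / (j.factorial : ℂ) *
      ((starRingEnd ℂ) z ^ j * dbar^[j] f z) with hb
  have hterm_eq : ∀ i ∈ Finset.range n,
      dbar (fun w => (-1 : ℂ) ^ (i + 1) / ((i + 1).factorial : ℂ) *
        ((starRingEnd ℂ) w ^ (i + 1) * dbar^[i] f w)) z = b (i + 1) - b i := by
    intro i hi
    have hgdi := hgd i (Finset.mem_range.mp hi)
    rw [dbar_const_mul ((differentiableAt_conj_pow i z).fun_mul hgdi),
      dbar_mul (differentiableAt_conj_pow i z) hgdi, dbar_conj_pow]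
    rw [hb]
    simp only
    rw [show dbar (dbar^[i] f) z = dbar^[i+1] f z from by rw [Function.iterate_succ_apply' dbar i f]]
    have hfact : (((i + 1).factorial : ℂ)) = ((i : ℂ) + 1) * (i.factorial : ℂ) := by
      rw [Nat.factorial_succ]; push_cast; ring
    have hne : (i.factorial : ℂ) ≠ 0 := by exact_mod_cast i.factorial_ne_zero
    have hne2 : ((i : ℂ) + 1) ≠ 0 := Nat.cast_add_one_ne_zero i
    rw [hfact]
    field_simp
    ring
  rw [Finset.sum_congr rfl hterm_eq, Finset.sum_range_sub b]
  have hb0 : b 0 = f z := by simp [hb]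
  have hbn : b n = 0 := by simp [hb, hpoly z hz]
  rw [hb0, hbn]
  ring

lemma pw_bound (n : ℕ) (x wz a t : ℝ) (b : ℕ → ℝ) (hx : 0 ≤ x) (hw : 0 ≤ wz)
    (ha : 0 ≤ a) (ht : 0 ≤ t) (hb : ∀ i, 0 ≤ b i)
    (hta : t ≤ a + ∑ i ∈ Finset.range n, x ^ (i + 1) * b i) :
    t ^ 2 / (1 + x ^ 2) ^ (2 * n) * wz ≤
      ((n : ℝ) + 1) * (a ^ 2 / (1 + x ^ 2) ^ (2 * n) * wz +
        ∑ i ∈ Finset.range n, b i ^ 2 * wz) := by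
  have hq : (0 : ℝ) < (1 + x ^ 2) ^ (2 * n) := by positivity
  set F : ℕ → ℝ := fun j => if j = 0 then a else x ^ j * b (j - 1) with hF
  have hFsum : ∑ j ∈ Finset.range (n + 1), F j
      = a + ∑ i ∈ Finset.range n, x ^ (i + 1) * b i := by
    rw [Finset.sum_range_succ']
    simp [hF, add_comm]
  have h2 : t ^ 2 ≤ (∑ j ∈ Finset.range (n + 1), F j) ^ 2 := by
    apply pow_le_pow_left₀ ht
    rw [hFsum]; exact hta
  have h3 : (∑ j ∈ Finset.range (n + 1), F j) ^ 2
      ≤ ((n : ℝ) + 1) * ∑ j ∈ Finset.range (n + 1), F j ^ 2 := by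
    have := sq_sum_le_card_mul_sum_sq (s := Finset.range (n + 1)) (f := F)
    simpa using this
  have h4 : ∑ j ∈ Finset.range (n + 1), F j ^ 2
      = a ^ 2 + ∑ i ∈ Finset.range n, (x ^ (i + 1)) ^ 2 * b i ^ 2 := by
    rw [Finset.sum_range_succ']
    simp [hF, mul_pow, add_comm]
  have h5 : ∑ i ∈ Finset.range n, (x ^ (i + 1)) ^ 2 * b i ^ 2
      ≤ ∑ i ∈ Finset.range n, (1 + x ^ 2) ^ (2 * n) * b i ^ 2 := by
    apply Finset.sum_le_sum
    intro i hi
    apply mul_le_mul_of_nonneg_right _ (sq_nonneg _)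
    calc (x ^ (i + 1)) ^ 2 = (x ^ 2) ^ (i + 1) := by ring
    _ ≤ (1 + x ^ 2) ^ (i + 1) := pow_le_pow_left₀ (sq_nonneg x) (by linarith) _
    _ ≤ (1 + x ^ 2) ^ (2 * n) := by
        apply pow_le_pow_right₀ (by nlinarith [sq_nonneg x])
        have := Finset.mem_range.mp hi; omega
  have hnum : t ^ 2 ≤ ((n : ℝ) + 1) *
      (a ^ 2 + ∑ i ∈ Finset.range n, (1 + x ^ 2) ^ (2 * n) * b i ^ 2) := by
    calc t ^ 2 ≤ ((n : ℝ) + 1) * ∑ j ∈ Finset.range (n + 1), F j ^ 2 := le_trans h2 h3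
    _ ≤ _ := by
        apply mul_le_mul_of_nonneg_left _ (by positivity)
        rw [h4]
        exact add_le_add_right h5 _
  calc t ^ 2 / (1 + x ^ 2) ^ (2 * n) * wz
      ≤ (((n : ℝ) + 1) * (a ^ 2 + ∑ i ∈ Finset.range n, (1 + x ^ 2) ^ (2 * n) * b i ^ 2))
        / (1 + x ^ 2) ^ (2 * n) * wz := by
        apply mul_le_mul_of_nonneg_right _ hw
        exact div_le_div_of_nonneg_right hnum hq.le
  _ = ((n : ℝ) + 1) * (a ^ 2 / (1 + x ^ 2) ^ (2 * n) * wz +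
        ∑ i ∈ Finset.range n, b i ^ 2 * wz) := by
        rw [← Finset.mul_sum, ← Finset.sum_mul]
        field_simp

lemma sum_Icc_one {M : Type*} [AddCommMonoid M] (n : ℕ) (F : ℕ → M) :
    ∑ k ∈ Finset.Icc 1 n, F k = ∑ i ∈ Finset.range n, F (i + 1) := by
  rw [← Finset.Ico_add_one_right_eq_Icc, Finset.sum_Ico_eq_sum_range]
  have h : n + 1 - 1 = n := by omega
  rw [h]
  exact Finset.sum_congr rfl fun i _ => by rw [add_comm]

theorem stmt_9 (n : ℕ) (hn : 1 ≤ n) :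
    ∃ C : ℝ, 0 < C ∧
      ∀ (Ω : Set ℂ), IsOpen Ω → ∀ p : ℂ → ℝ, Measurable p → (∀ z ∈ Ω, 0 ≤ p z) →
      ∀ f : ℂ → ℂ, ContDiffOn ℝ n f Ω → (∀ z ∈ Ω, dbar^[n] f z = 0) →
      (∀ k < n, IntegrableOn (fun z => ‖dbar^[k] f z‖ ^ 2 * Real.exp (-(p z))) Ω) →
      ∀ u : ℂ → ℂ, ContDiffOn ℝ (n + 1 : ℕ) u Ω → (∀ z ∈ Ω, dbar u z = f z) →
      (∫ z in Ω, ‖u z‖ ^ 2 / (1 + ‖z‖ ^ 2) ^ (2 * n) * Real.exp (-(p z))) ≤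
        n * ∑ k ∈ Finset.Icc 1 n, ∫ z in Ω, ‖dbar^[k - 1] f z‖ ^ 2 * Real.exp (-(p z)) →
      ∃ u₀ : ℂ → ℂ, DifferentiableOn ℂ u₀ Ω ∧
        (∀ z ∈ Ω, u z = u₀ z - ∑ k ∈ Finset.Icc 1 n,
          ((-1) ^ k / (k.factorial : ℂ)) * (starRingEnd ℂ) z ^ k * dbar^[k - 1] f z) ∧
        (∫ z in Ω, ‖u₀ z‖ ^ 2 / (1 + ‖z‖ ^ 2) ^ (2 * n) * Real.exp (-(p z))) ≤
          C * ∑ k ∈ Finset.range n, ∫ z in Ω, ‖dbar^[k] f z‖ ^ 2 * Real.exp (-(p z)) := by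
  refine ⟨((n : ℝ) + 1) ^ 2, by positivity, ?_⟩
  intro Ω hΩ p hp hp0 f hf hpoly hint u hu hdu hest
  set u₀ : ℂ → ℂ := fun w => u w + ∑ i ∈ Finset.range n,
      (-1 : ℂ) ^ (i + 1) / ((i + 1).factorial : ℂ) *
        ((starRingEnd ℂ) w ^ (i + 1) * dbar^[i] f w) with hu₀def
  have hSrepr : ∀ z : ℂ, (∑ k ∈ Finset.Icc 1 n,
      ((-1) ^ k / (k.factorial : ℂ)) * (starRingEnd ℂ) z ^ k * dbar^[k - 1] f z)
      = ∑ i ∈ Finset.range n, (-1 : ℂ) ^ (i + 1) / ((i + 1).factorial : ℂ) *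
        ((starRingEnd ℂ) z ^ (i + 1) * dbar^[i] f z) := by
    intro z
    rw [sum_Icc_one]
    exact Finset.sum_congr rfl fun i _ => by simp only [Nat.add_sub_cancel]; ring
  refine ⟨u₀, main_holo hn hΩ hf hpoly hu hdu, fun z hz => by rw [hSrepr z, hu₀def]; ring, ?_⟩
  -- notation
  have hwm : Measurable fun z => Real.exp (-(p z)) := Real.measurable_exp.comp hp.neg
  have hqcont : Continuous fun z : ℂ => (1 + ‖z‖ ^ 2) ^ (2 * n) :=
    (continuous_const.add ((continuous_norm).pow 2)).pow _
  have hqpos : ∀ z : ℂ, (0 : ℝ) < (1 + ‖z‖ ^ 2) ^ (2 * n) := fun z => by positivity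
  have hcontg : ∀ i, i < n → ContinuousOn (dbar^[i] f) Ω := fun i hi =>
    (dbar_iter_contDiffOn hΩ hf i hi.le).continuousOn
  have hcontu₀ : ContinuousOn u₀ Ω := by
    apply (hu.continuousOn).add
    apply continuousOn_finset_sum
    intro i hi
    exact continuousOn_const.mul (((Complex.continuous_conj).pow (i + 1)).continuousOn.mul
      (hcontg i (Finset.mem_range.mp hi)))
  have asm : ∀ v : ℂ → ℂ, ContinuousOn v Ω → AEStronglyMeasurable
      (fun z => ‖v z‖ ^ 2 / (1 + ‖z‖ ^ 2) ^ (2 * n) * Real.exp (-(p z)))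
      (volume.restrict Ω) := by
    intro v hv
    exact (((hv.norm.pow 2).div hqcont.continuousOn
      (fun z _ => (hqpos z).ne')).aestronglyMeasurable hΩ.measurableSet).mul
      hwm.aestronglyMeasurable
  have hTsum_int : IntegrableOn (fun z => ∑ i ∈ Finset.range n,
      ‖dbar^[i] f z‖ ^ 2 * Real.exp (-(p z))) Ω :=
    integrable_finset_sum _ fun i hi => hint i (Finset.mem_range.mp hi)
  -- pointwise bounds
  have hnorm_sum : ∀ z : ℂ, ‖∑ i ∈ Finset.range n,
      (-1 : ℂ) ^ (i + 1) / ((i + 1).factorial : ℂ) *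
        ((starRingEnd ℂ) z ^ (i + 1) * dbar^[i] f z)‖
      ≤ ∑ i ∈ Finset.range n, ‖z‖ ^ (i + 1) * ‖dbar^[i] f z‖ := by
    intro z
    refine le_trans (norm_sum_le _ _) (Finset.sum_le_sum fun i _ => ?_)
    rw [norm_mul, norm_mul, norm_pow, RCLike.norm_conj]
    have hc : ‖(-1 : ℂ) ^ (i + 1) / ((i + 1).factorial : ℂ)‖ ≤ 1 := by
      rw [norm_div, norm_pow, norm_neg, norm_one, one_pow, Complex.norm_natCast]
      have h1 : (1 : ℝ) ≤ ((i + 1).factorial : ℝ) := by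
        exact_mod_cast Nat.one_le_iff_ne_zero.mpr (i + 1).factorial_ne_zero
      rw [div_le_one (by linarith)]
      exact h1
    calc ‖(-1 : ℂ) ^ (i + 1) / ((i + 1).factorial : ℂ)‖ * (‖z‖ ^ (i + 1) * ‖dbar^[i] f z‖)
        ≤ 1 * (‖z‖ ^ (i + 1) * ‖dbar^[i] f z‖) :=
          mul_le_mul_of_nonneg_right hc (by positivity)
    _ = ‖z‖ ^ (i + 1) * ‖dbar^[i] f z‖ := one_mul _
  have hpt1 : ∀ z : ℂ, ‖u₀ z‖ ^ 2 / (1 + ‖z‖ ^ 2) ^ (2 * n) * Real.exp (-(p z))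
      ≤ ((n : ℝ) + 1) * (‖u z‖ ^ 2 / (1 + ‖z‖ ^ 2) ^ (2 * n) * Real.exp (-(p z))
        + ∑ i ∈ Finset.range n, ‖dbar^[i] f z‖ ^ 2 * Real.exp (-(p z))) := by
    intro z
    apply pw_bound n ‖z‖ _ _ _ _ (norm_nonneg z) (Real.exp_nonneg _) (norm_nonneg _)
      (norm_nonneg _) (fun i => norm_nonneg _)
    calc ‖u₀ z‖ ≤ ‖u z‖ + ‖∑ i ∈ Finset.range n,
        (-1 : ℂ) ^ (i + 1) / ((i + 1).factorial : ℂ) *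
          ((starRingEnd ℂ) z ^ (i + 1) * dbar^[i] f z)‖ := norm_add_le _ _
    _ ≤ ‖u z‖ + ∑ i ∈ Finset.range n, ‖z‖ ^ (i + 1) * ‖dbar^[i] f z‖ :=
        add_le_add_right (hnorm_sum z) _
  have hpt2 : ∀ z : ℂ, ‖u z‖ ^ 2 / (1 + ‖z‖ ^ 2) ^ (2 * n) * Real.exp (-(p z))
      ≤ ((n : ℝ) + 1) * (‖u₀ z‖ ^ 2 / (1 + ‖z‖ ^ 2) ^ (2 * n) * Real.exp (-(p z))
        + ∑ i ∈ Finset.range n, ‖dbar^[i] f z‖ ^ 2 * Real.exp (-(p z))) := by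
    intro z
    apply pw_bound n ‖z‖ _ _ _ _ (norm_nonneg z) (Real.exp_nonneg _) (norm_nonneg _)
      (norm_nonneg _) (fun i => norm_nonneg _)
    have : u z = u₀ z - ∑ i ∈ Finset.range n,
        (-1 : ℂ) ^ (i + 1) / ((i + 1).factorial : ℂ) *
          ((starRingEnd ℂ) z ^ (i + 1) * dbar^[i] f z) := by rw [hu₀def]; ring
    calc ‖u z‖ = ‖u₀ z - ∑ i ∈ Finset.range n,
        (-1 : ℂ) ^ (i + 1) / ((i + 1).factorial : ℂ) *
          ((starRingEnd ℂ) z ^ (i + 1) * dbar^[i] f z)‖ := by rw [← this]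
    _ ≤ ‖u₀ z‖ + ‖∑ i ∈ Finset.range n,
        (-1 : ℂ) ^ (i + 1) / ((i + 1).factorial : ℂ) *
          ((starRingEnd ℂ) z ^ (i + 1) * dbar^[i] f z)‖ := norm_sub_le _ _
    _ ≤ ‖u₀ z‖ + ∑ i ∈ Finset.range n, ‖z‖ ^ (i + 1) * ‖dbar^[i] f z‖ :=
        add_le_add_right (hnorm_sum z) _
  -- sums of integrals nonneg
  have hBnn : (0 : ℝ) ≤ ∑ k ∈ Finset.range n,
      ∫ z in Ω, ‖dbar^[k] f z‖ ^ 2 * Real.exp (-(p z)) :=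
    Finset.sum_nonneg fun k _ => integral_nonneg fun z => by positivity
  -- rewrite hypothesis
  have hest' : (∫ z in Ω, ‖u z‖ ^ 2 / (1 + ‖z‖ ^ 2) ^ (2 * n) * Real.exp (-(p z)))
      ≤ (n : ℝ) * ∑ k ∈ Finset.range n,
        ∫ z in Ω, ‖dbar^[k] f z‖ ^ 2 * Real.exp (-(p z)) := by
    refine le_trans hest (le_of_eq ?_)
    congr 1
    rw [sum_Icc_one]
    exact Finset.sum_congr rfl fun i _ => by simp only [Nat.add_sub_cancel]
  by_cases hUint : IntegrableOn
      (fun z => ‖u z‖ ^ 2 / (1 + ‖z‖ ^ 2) ^ (2 * n) * Real.exp (-(p z))) Ω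
  · -- main case
    have hdom : IntegrableOn (fun z => ((n : ℝ) + 1) *
        (‖u z‖ ^ 2 / (1 + ‖z‖ ^ 2) ^ (2 * n) * Real.exp (-(p z))
          + ∑ i ∈ Finset.range n, ‖dbar^[i] f z‖ ^ 2 * Real.exp (-(p z)))) Ω :=
      (hUint.add hTsum_int).const_mul _
    have hI₀int : IntegrableOn
        (fun z => ‖u₀ z‖ ^ 2 / (1 + ‖z‖ ^ 2) ^ (2 * n) * Real.exp (-(p z))) Ω := by
      refine Integrable.mono' hdom (asm u₀ hcontu₀) (ae_of_all _ fun z => ?_)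
      rw [Real.norm_of_nonneg (by positivity)]
      exact hpt1 z
    calc (∫ z in Ω, ‖u₀ z‖ ^ 2 / (1 + ‖z‖ ^ 2) ^ (2 * n) * Real.exp (-(p z)))
        ≤ ∫ z in Ω, ((n : ℝ) + 1) *
          (‖u z‖ ^ 2 / (1 + ‖z‖ ^ 2) ^ (2 * n) * Real.exp (-(p z))
            + ∑ i ∈ Finset.range n, ‖dbar^[i] f z‖ ^ 2 * Real.exp (-(p z))) :=
          integral_mono hI₀int hdom hpt1
    _ = ((n : ℝ) + 1) * ((∫ z in Ω, ‖u z‖ ^ 2 / (1 + ‖z‖ ^ 2) ^ (2 * n) * Real.exp (-(p z)))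
          + ∫ z in Ω, ∑ i ∈ Finset.range n, ‖dbar^[i] f z‖ ^ 2 * Real.exp (-(p z))) := by
        rw [integral_const_mul, integral_add hUint hTsum_int]
    _ = ((n : ℝ) + 1) * ((∫ z in Ω, ‖u z‖ ^ 2 / (1 + ‖z‖ ^ 2) ^ (2 * n) * Real.exp (-(p z)))
          + ∑ i ∈ Finset.range n, ∫ z in Ω, ‖dbar^[i] f z‖ ^ 2 * Real.exp (-(p z))) := by
        rw [integral_finset_sum _ fun i hi => hint i (Finset.mem_range.mp hi)]
    _ ≤ ((n : ℝ) + 1) * ((n : ℝ) * (∑ k ∈ Finset.range n,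
          ∫ z in Ω, ‖dbar^[k] f z‖ ^ 2 * Real.exp (-(p z)))
          + ∑ i ∈ Finset.range n, ∫ z in Ω, ‖dbar^[i] f z‖ ^ 2 * Real.exp (-(p z))) := by
        apply mul_le_mul_of_nonneg_left (add_le_add_left hest' _) (by positivity)
    _ ≤ ((n : ℝ) + 1) ^ 2 * ∑ k ∈ Finset.range n,
          ∫ z in Ω, ‖dbar^[k] f z‖ ^ 2 * Real.exp (-(p z)) := by
        nlinarith [hBnn]
  · -- degenerate case: LHS integral is zero
    have hnot : ¬ IntegrableOn
        (fun z => ‖u₀ z‖ ^ 2 / (1 + ‖z‖ ^ 2) ^ (2 * n) * Real.exp (-(p z))) Ω := by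
      intro hI₀
      apply hUint
      refine Integrable.mono' ((hI₀.add hTsum_int).const_mul ((n : ℝ) + 1))
        (asm u hu.continuousOn) (ae_of_all _ fun z => ?_)
      rw [Real.norm_of_nonneg (by positivity)]
      exact hpt2 z
    rw [integral_undef hnot]
    positivity
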